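/- Let α ∈ {+1, −1}, let A and B = A + α Z Zᵀ be n×n real symmetric positive definite matrices, where Z is n×k. Let V = A⁻¹ Z (I_k + α Zᵀ A⁻¹ Z)^{−1/2} (the matrix I_k + α Zᵀ A⁻¹ Z being positive definite under these hypotheses). Let C̃ be an n×n symmetric positive semidefinite matrix such that A^{−1/2} − α C̃ is positive definite, and define the residual R(C̃) = V Vᵀ − A^{−1/2} C̃ − C̃ A^{−1/2} + α C̃². Then ‖(A + α Z Zᵀ)^{−1/2} − (A^{−1/2} − α C̃)‖_F ≤ (n^{1/2} ‖R(C̃)‖_F)^{1/2} and ‖(A + α Z Zᵀ)^{−1/2} − (A^{−1/2} − α C̃)‖₂ ≤ min( ‖R(C̃)‖_F / √(λ_min((A + α Z Zᵀ)⁻¹)), (n^{1/2} ‖R(C̃)‖_F)^{1/2} ). -/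

import Mathlib

open Matrix

/-- Former Mathlib lemma `Matrix.isHermitian_transpose_mul_self` (removed upstream). -/
theorem Matrix.isHermitian_transpose_mul_self {α : Type*} {m n : Type*} [CommSemiring α]
    [StarRing α] [TrivialStar α] [Fintype m] (A : Matrix m n α) : (Aᵀ * A).IsHermitian := by
  simpa [Matrix.conjTranspose_eq_transpose_of_trivial] using
    Matrix.isHermitian_conjTranspose_mul_self A

/-- Former Mathlib definition `Matrix.PosSemidef.sqrt` (removed upstream), with its old value. -/
noncomputable def Matrix.PosSemidef.sqrt {n : Type*} [Fintype n]
    [DecidableEq n] {A : Matrix n n ℝ} (hA : A.PosSemidef) : Matrix n n ℝ :=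
  hA.1.eigenvectorUnitary.1 * diagonal ((↑) ∘ (√·) ∘ hA.1.eigenvalues) *
    (star hA.1.eigenvectorUnitary : Matrix n n ℝ)

/-- The Frobenius norm of a real matrix. -/
noncomputable def frobNorm {n m : ℕ} (M : Matrix (Fin n) (Fin m) ℝ) : ℝ :=
  Real.sqrt (∑ i, ∑ j, (M i j) ^ 2)

/-- The spectral norm (largest singular value) of a real square matrix. -/
noncomputable def specNorm {n : ℕ} (M : Matrix (Fin n) (Fin n) ℝ) : ℝ :=
  ⨆ i, Real.sqrt ((Matrix.isHermitian_transpose_mul_self M).eigenvalues i)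

/-- The smallest eigenvalue of a real symmetric matrix. -/
noncomputable def lambdaMin {n : ℕ} {M : Matrix (Fin n) (Fin n) ℝ}
    (hM : M.IsHermitian) : ℝ :=
  ⨅ i, hM.eigenvalues i

lemma Matrix.PosSemidef.posSemidef_sqrt {n : Type*} [Fintype n] [DecidableEq n]
    {A : Matrix n n ℝ} (hA : A.PosSemidef) : hA.sqrt.PosSemidef := by
  unfold Matrix.PosSemidef.sqrt
  have hD : (diagonal ((↑) ∘ (√·) ∘ hA.1.eigenvalues) : Matrix n n ℝ).PosSemidef :=
    PosSemidef.diagonal (fun i => Real.sqrt_nonneg _)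
  simpa [Matrix.star_eq_conjTranspose] using
    hD.mul_mul_conjTranspose_same (hA.1.eigenvectorUnitary : Matrix n n ℝ)

lemma Matrix.PosSemidef.sqrt_mul_self {n : Type*} [Fintype n] [DecidableEq n]
    {A : Matrix n n ℝ} (hA : A.PosSemidef) : hA.sqrt * hA.sqrt = A := by
  unfold Matrix.PosSemidef.sqrt
  have hU : (star (hA.1.eigenvectorUnitary : Matrix n n ℝ)) *
      (hA.1.eigenvectorUnitary : Matrix n n ℝ) = 1 := UnitaryGroup.star_mul_self _
  have hDD : (diagonal ((↑) ∘ (√·) ∘ hA.1.eigenvalues) : Matrix n n ℝ) *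
      diagonal ((↑) ∘ (√·) ∘ hA.1.eigenvalues) = diagonal hA.1.eigenvalues := by
    rw [diagonal_mul_diagonal]
    congr 1
    funext i
    simp [Real.mul_self_sqrt (hA.eigenvalues_nonneg i)]
  calc _ = (hA.1.eigenvectorUnitary : Matrix n n ℝ) *
        ((diagonal ((↑) ∘ (√·) ∘ hA.1.eigenvalues) : Matrix n n ℝ) *
          (star (hA.1.eigenvectorUnitary : Matrix n n ℝ) *
            (hA.1.eigenvectorUnitary : Matrix n n ℝ)) *
          diagonal ((↑) ∘ (√·) ∘ hA.1.eigenvalues)) *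
        star (hA.1.eigenvectorUnitary : Matrix n n ℝ) := by simp only [Matrix.mul_assoc]
    _ = (hA.1.eigenvectorUnitary : Matrix n n ℝ) * diagonal hA.1.eigenvalues *
        star (hA.1.eigenvectorUnitary : Matrix n n ℝ) := by rw [hU, Matrix.mul_one, hDD]
    _ = A := by simpa using hA.1.spectral_theorem.symm

namespace Hlp
variable {n : ℕ}
lemma frob_nonneg {m : ℕ} (M : Matrix (Fin n) (Fin m) ℝ) : 0 ≤ frobNorm M :=
  Real.sqrt_nonneg _

lemma frob_sq {m : ℕ} (M : Matrix (Fin n) (Fin m) ℝ) :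
    frobNorm M ^ 2 = ∑ i, ∑ j, (M i j) ^ 2 := by
  rw [frobNorm, Real.sq_sqrt]; positivity

lemma dot_self_nonneg (v : Fin n → ℝ) : 0 ≤ v ⬝ᵥ v :=
  Finset.sum_nonneg fun i _ => mul_self_nonneg (v i)

lemma dot_self_pos {v : Fin n → ℝ} (hv : v ≠ 0) : 0 < v ⬝ᵥ v := by
  rcases (dot_self_nonneg v).lt_or_eq with h | h
  · exact h
  · exfalso; apply hv
    ext i
    have h0 : ∀ j ∈ Finset.univ, 0 ≤ v j * v j := fun j _ => mul_self_nonneg _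
    have h1 := (Finset.sum_eq_zero_iff_of_nonneg h0).mp h.symm i (Finset.mem_univ i)
    have := mul_self_eq_zero.mp h1
    simpa using this

lemma dot_mulVec_abs_le (M : Matrix (Fin n) (Fin n) ℝ) (v : Fin n → ℝ) :
    |v ⬝ᵥ M *ᵥ v| ≤ frobNorm M * (v ⬝ᵥ v) := by
  have h1 : (v ⬝ᵥ M *ᵥ v) ^ 2 ≤ (v ⬝ᵥ v) * ((M *ᵥ v) ⬝ᵥ (M *ᵥ v)) := by
    have := Finset.sum_mul_sq_le_sq_mul_sq Finset.univ v (M *ᵥ v)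
    simpa [dotProduct, sq] using this
  have h2 : (M *ᵥ v) ⬝ᵥ (M *ᵥ v) ≤ (∑ i, ∑ j, M i j ^ 2) * (v ⬝ᵥ v) := by
    unfold dotProduct
    rw [Finset.sum_mul]
    apply Finset.sum_le_sum
    intro i _
    have := Finset.sum_mul_sq_le_sq_mul_sq Finset.univ (fun j => M i j) v
    calc (M *ᵥ v) i * (M *ᵥ v) i = (∑ j, M i j * v j) ^ 2 := by
          simp [mulVec, dotProduct, sq]
      _ ≤ (∑ j, M i j ^ 2) * ∑ j, v j ^ 2 := this
      _ = (∑ j, M i j ^ 2) * (v ⬝ᵥ v) := by simp [dotProduct, sq]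
  have hfrob : (∑ i, ∑ j, M i j ^ 2) = frobNorm M ^ 2 := (frob_sq M).symm
  have h3 : (v ⬝ᵥ M *ᵥ v) ^ 2 ≤ (frobNorm M * (v ⬝ᵥ v)) ^ 2 := by
    calc (v ⬝ᵥ M *ᵥ v) ^ 2 ≤ (v ⬝ᵥ v) * ((M *ᵥ v) ⬝ᵥ (M *ᵥ v)) := h1
      _ ≤ (v ⬝ᵥ v) * ((∑ i, ∑ j, M i j ^ 2) * (v ⬝ᵥ v)) := by
          apply mul_le_mul_of_nonneg_left h2 (dot_self_nonneg v)
      _ = (frobNorm M * (v ⬝ᵥ v)) ^ 2 := by rw [hfrob]; ring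
  have hnn : 0 ≤ frobNorm M * (v ⬝ᵥ v) := mul_nonneg (frob_nonneg M) (dot_self_nonneg v)
  calc |v ⬝ᵥ M *ᵥ v| = Real.sqrt ((v ⬝ᵥ M *ᵥ v) ^ 2) := (Real.sqrt_sq_eq_abs _).symm
    _ ≤ Real.sqrt ((frobNorm M * (v ⬝ᵥ v)) ^ 2) := Real.sqrt_le_sqrt h3
    _ = frobNorm M * (v ⬝ᵥ v) := by rw [Real.sqrt_sq hnn]

lemma dot_conj (U : Matrix (Fin n) (Fin n) ℝ) (d : Fin n → ℝ) (v : Fin n → ℝ) :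
    v ⬝ᵥ ((U * diagonal d * Uᵀ) *ᵥ v) = ∑ i, d i * ((Uᵀ *ᵥ v) i) ^ 2 := by
  rw [← Matrix.mulVec_mulVec, ← Matrix.mulVec_mulVec, Matrix.dotProduct_mulVec,
    ← Matrix.mulVec_transpose]
  unfold dotProduct
  apply Finset.sum_congr rfl
  intro i _
  rw [Matrix.mulVec_diagonal]
  ring

lemma dot_conj_self {U : Matrix (Fin n) (Fin n) ℝ} (hU : U * Uᵀ = 1) (v : Fin n → ℝ) :
    (Uᵀ *ᵥ v) ⬝ᵥ (Uᵀ *ᵥ v) = v ⬝ᵥ v := by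
  nth_rewrite 1 [Matrix.mulVec_transpose]
  rw [← Matrix.dotProduct_mulVec, Matrix.mulVec_mulVec, hU, Matrix.one_mulVec]


lemma star_eq_transpose {m : ℕ} (M : Matrix (Fin n) (Fin m) ℝ) : Mᴴ = Mᵀ := by
  ext i j; simp [conjTranspose_apply]

lemma unit_star_mul {M : Matrix (Fin n) (Fin n) ℝ} (hM : M.IsHermitian) :
    (hM.eigenvectorUnitary : Matrix (Fin n) (Fin n) ℝ)ᵀ *
      (hM.eigenvectorUnitary : Matrix (Fin n) (Fin n) ℝ) = 1 := by
  rw [← star_eq_transpose]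
  exact UnitaryGroup.star_mul_self hM.eigenvectorUnitary

lemma unit_mul_star {M : Matrix (Fin n) (Fin n) ℝ} (hM : M.IsHermitian) :
    (hM.eigenvectorUnitary : Matrix (Fin n) (Fin n) ℝ) *
      (hM.eigenvectorUnitary : Matrix (Fin n) (Fin n) ℝ)ᵀ = 1 := by
  rw [← star_eq_transpose]
  exact mem_unitaryGroup_iff.mp hM.eigenvectorUnitary.2

lemma spectral {M : Matrix (Fin n) (Fin n) ℝ} (hM : M.IsHermitian) :
    M = (hM.eigenvectorUnitary : Matrix (Fin n) (Fin n) ℝ) * diagonal hM.eigenvalues *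
      (hM.eigenvectorUnitary : Matrix (Fin n) (Fin n) ℝ)ᵀ := by
  rw [← star_eq_transpose]
  simpa [Matrix.star_eq_conjTranspose] using hM.spectral_theorem

-- eigenvector of a Hermitian matrix, as a plain vector
lemma exists_eigenvector {M : Matrix (Fin n) (Fin n) ℝ} (hM : M.IsHermitian) (i : Fin n) :
    ∃ v : Fin n → ℝ, v ≠ 0 ∧ M *ᵥ v = hM.eigenvalues i • v := by
  refine ⟨⇑(hM.eigenvectorBasis i), ?_, hM.mulVec_eigenvectorBasis i⟩
  intro h0
  have : hM.eigenvectorBasis i = 0 := by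
    ext j
    exact congrFun h0 j
  exact hM.eigenvectorBasis.orthonormal.ne_zero i this


lemma trace_eq_sum_eigen {M : Matrix (Fin n) (Fin n) ℝ} (hM : M.IsHermitian) :
    Matrix.trace M = ∑ i, hM.eigenvalues i := by
  conv_lhs => rw [spectral hM]
  rw [Matrix.trace_mul_cycle, unit_star_mul hM, Matrix.one_mul, Matrix.trace_diagonal]

lemma rayleigh_lower {M : Matrix (Fin n) (Fin n) ℝ} (hM : M.IsHermitian) (c : ℝ)
    (hc : ∀ i, c ≤ hM.eigenvalues i) (v : Fin n → ℝ) :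
    c * (v ⬝ᵥ v) ≤ v ⬝ᵥ M *ᵥ v := by
  set U := (hM.eigenvectorUnitary : Matrix (Fin n) (Fin n) ℝ) with hUdef
  have h1 : v ⬝ᵥ M *ᵥ v = ∑ i, hM.eigenvalues i * ((Uᵀ *ᵥ v) i) ^ 2 := by
    conv_lhs => rw [spectral hM]
    exact dot_conj U hM.eigenvalues v
  have h2 : v ⬝ᵥ v = ∑ i, ((Uᵀ *ᵥ v) i) ^ 2 := by
    rw [← dot_conj_self (unit_mul_star hM) v]
    simp [dotProduct, sq, hUdef]
  rw [h1, h2, Finset.mul_sum]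
  apply Finset.sum_le_sum
  intro i _
  exact mul_le_mul_of_nonneg_right (hc i) (sq_nonneg _)

lemma inf_eigen_le {M : Matrix (Fin n) (Fin n) ℝ} (hM : M.IsHermitian) {v : Fin n → ℝ}
    (hv : v ≠ 0) {c : ℝ} (hvc : M *ᵥ v = c • v) :
    (⨅ i, hM.eigenvalues i) ≤ c := by
  set m := ⨅ i, hM.eigenvalues i with hm
  have hbdd : BddBelow (Set.range hM.eigenvalues) := Set.Finite.bddBelow (Set.finite_range _)
  have hle : ∀ i, m ≤ hM.eigenvalues i := fun i => ciInf_le hbdd i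
  have h1 : m * (v ⬝ᵥ v) ≤ v ⬝ᵥ M *ᵥ v := rayleigh_lower hM m hle v
  have h2 : v ⬝ᵥ M *ᵥ v = c * (v ⬝ᵥ v) := by
    rw [hvc]
    simp [dotProduct, Finset.mul_sum]
    exact Finset.sum_congr rfl fun i _ => by ring
  rw [h2] at h1
  exact le_of_mul_le_mul_right (by linarith) (dot_self_pos hv)

lemma psd_of_det_ne_zero {P : Matrix (Fin n) (Fin n) ℝ} (hP : P.PosSemidef)
    (hdet : P.det ≠ 0) : P.PosDef := by
  refine Matrix.PosDef.of_dotProduct_mulVec_pos hP.1 fun x hx => ?_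
  rcases (hP.dotProduct_mulVec_nonneg x).lt_or_eq with hlt | heq
  · simpa using hlt
  · exfalso
    have h0 : star x ⬝ᵥ P *ᵥ x = 0 := heq.symm
    have hPx : P *ᵥ x = 0 := (hP.dotProduct_mulVec_zero_iff x).mp h0
    have hunit : IsUnit P.det := isUnit_iff_ne_zero.mpr hdet
    have : x = 0 := by
      have := congrArg (fun w => P⁻¹ *ᵥ w) hPx
      simpa [Matrix.mulVec_mulVec, Matrix.nonsing_inv_mul P hunit] using this
    exact hx this

lemma sqrt_posDef {P : Matrix (Fin n) (Fin n) ℝ} (hP : P.PosDef) :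
    (hP.posSemidef.sqrt).PosDef := by
  apply psd_of_det_ne_zero hP.posSemidef.posSemidef_sqrt
  intro h0
  have := hP.posSemidef.sqrt_mul_self
  have hdet : P.det = 0 := by
    rw [← this, Matrix.det_mul, h0, mul_zero]
  exact hP.det_pos.ne' hdet

lemma psd_diag_nonneg {P : Matrix (Fin n) (Fin n) ℝ} (hP : P.PosSemidef) (i : Fin n) :
    0 ≤ P i i := by
  exact hP.diag_nonneg

lemma frob_eq_trace (M : Matrix (Fin n) (Fin n) ℝ) :
    ∑ i, ∑ j, (M i j) ^ 2 = Matrix.trace (Mᵀ * M) := by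
  rw [Matrix.trace, Finset.sum_comm]
  simp [Matrix.diag, Matrix.mul_apply, transpose_apply, sq]

lemma conj_mul_split {U P Q : Matrix (Fin n) (Fin n) ℝ} (hU : U * Uᵀ = 1) :
    Uᵀ * (P * Q) * U = (Uᵀ * P * U) * (Uᵀ * Q * U) := by
  have : (Uᵀ * P * U) * (Uᵀ * Q * U) = Uᵀ * P * ((U * Uᵀ) * (Q * U)) := by
    simp only [Matrix.mul_assoc]
  rw [this, hU, Matrix.one_mul]
  simp only [Matrix.mul_assoc]

lemma trace_conj {U M : Matrix (Fin n) (Fin n) ℝ} (hU : U * Uᵀ = 1) :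
    Matrix.trace (Uᵀ * M * U) = Matrix.trace M := by
  rw [Matrix.trace_mul_comm, ← Matrix.mul_assoc, hU, Matrix.one_mul]

lemma sum_abs_le_sqrt (a : Fin n → ℝ) :
    ∑ i, |a i| ≤ Real.sqrt n * Real.sqrt (∑ i, (a i) ^ 2) := by
  have hcs := Finset.sum_mul_sq_le_sq_mul_sq Finset.univ (fun i => |a i|) (fun _ => (1:ℝ))
  simp only [mul_one, one_pow, Finset.sum_const, Finset.card_univ, Fintype.card_fin,
    nsmul_eq_mul, sq_abs] at hcs
  have h0 : 0 ≤ ∑ i, |a i| := Finset.sum_nonneg fun i _ => abs_nonneg _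
  calc ∑ i, |a i| = Real.sqrt ((∑ i, |a i|) ^ 2) := (Real.sqrt_sq h0).symm
    _ ≤ Real.sqrt ((∑ i, (a i) ^ 2) * n) := Real.sqrt_le_sqrt hcs
    _ = Real.sqrt n * Real.sqrt (∑ i, (a i) ^ 2) := by
        rw [Real.sqrt_mul (by positivity) (n : ℝ), mul_comm]



lemma powers_stormer {S X : Matrix (Fin n) (Fin n) ℝ} (hS : S.PosSemidef) (hX : X.PosSemidef) :
    ∑ i, ∑ j, ((S - X) i j) ^ 2 ≤ Real.sqrt n * frobNorm (S * S - X * X) := by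
  have hE : (S - X).IsHermitian := hS.1.sub hX.1
  set E := S - X with hEdef
  set U := (hE.eigenvectorUnitary : Matrix (Fin n) (Fin n) ℝ) with hUdef
  set d := hE.eigenvalues with hddef
  have hU1 : Uᵀ * U = 1 := unit_star_mul hE
  have hU2 : U * Uᵀ = 1 := unit_mul_star hE
  have hdiag : Uᵀ * E * U = diagonal d := by
    conv_lhs => rw [spectral hE]
    calc Uᵀ * (U * diagonal d * Uᵀ) * U
        = (Uᵀ * U) * diagonal d * (Uᵀ * U) := by simp only [Matrix.mul_assoc]
      _ = diagonal d := by rw [hU1, Matrix.one_mul, Matrix.mul_one]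
  set S' := Uᵀ * S * U with hS'def
  set X' := Uᵀ * X * U with hX'def
  have hS'p : S'.PosSemidef := by
    have := hS.conjTranspose_mul_mul_same U
    rwa [star_eq_transpose] at this
  have hX'p : X'.PosSemidef := by
    have := hX.conjTranspose_mul_mul_same U
    rwa [star_eq_transpose] at this
  have habs : ∀ i, |d i| ≤ S' i i + X' i i := by
    intro i
    have hplus : Uᵀ * (X + X) * U = S' + X' - diagonal d := by
      have h1 : X + X = S + X - E := by rw [hEdef]; abel
      rw [h1]
      simp only [Matrix.mul_add, Matrix.add_mul, Matrix.mul_sub, Matrix.sub_mul]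
      rw [hdiag]
    have hminus : Uᵀ * (S + S) * U = S' + X' + diagonal d := by
      have h1 : S + S = S + X + E := by rw [hEdef]; abel
      rw [h1]
      simp only [Matrix.mul_add, Matrix.add_mul]
      rw [hdiag]
    have hp1 : (0:ℝ) ≤ (S' + X' - diagonal d) i i := by
      rw [← hplus]
      refine psd_diag_nonneg ?_ i
      have := (hX.add hX).conjTranspose_mul_mul_same U
      rwa [star_eq_transpose] at this
    have hp2 : (0:ℝ) ≤ (S' + X' + diagonal d) i i := by
      rw [← hminus]
      refine psd_diag_nonneg ?_ i
      have := (hS.add hS).conjTranspose_mul_mul_same U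
      rwa [star_eq_transpose] at this
    simp only [Matrix.sub_apply, Matrix.add_apply, Matrix.diagonal_apply_eq] at hp1 hp2
    rw [abs_le]
    constructor <;> linarith
  set M := S * S - X * X with hMdef
  have hMconj : Uᵀ * M * U = diagonal d * S' + X' * diagonal d := by
    have h1 : M = E * S + X * E := by rw [hEdef, hMdef]; noncomm_ring
    rw [h1]
    simp only [Matrix.mul_add, Matrix.add_mul]
    rw [conj_mul_split hU2, conj_mul_split hU2, hdiag]
  have hMii : ∀ i, (Uᵀ * M * U) i i = d i * (S' i i + X' i i) := by
    intro i
    rw [hMconj]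
    simp only [Matrix.add_apply, Matrix.diagonal_mul, Matrix.mul_diagonal]
    ring
  have hsq : ∀ i, d i ^ 2 ≤ |(Uᵀ * M * U) i i| := by
    intro i
    rw [hMii i, abs_mul]
    have h1 : |S' i i + X' i i| = S' i i + X' i i :=
      abs_of_nonneg (le_trans (abs_nonneg _) (habs i))
    rw [h1]
    calc d i ^ 2 = |d i| * |d i| := by rw [← sq_abs, sq]
      _ ≤ |d i| * (S' i i + X' i i) :=
          mul_le_mul_of_nonneg_left (habs i) (abs_nonneg _)
  have hEsum : ∑ i, ∑ j, (E i j) ^ 2 = ∑ i, d i ^ 2 := by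
    rw [frob_eq_trace]
    have hET : Eᵀ = E := by rw [← star_eq_transpose]; exact hE.eq
    rw [hET]
    have hc : Uᵀ * (E * E) * U = diagonal d * diagonal d := by
      rw [conj_mul_split hU2, hdiag]
    calc Matrix.trace (E * E) = Matrix.trace (Uᵀ * (E * E) * U) := (trace_conj hU2).symm
      _ = Matrix.trace (diagonal d * diagonal d) := by rw [hc]
      _ = ∑ i, d i ^ 2 := by
          rw [Matrix.diagonal_mul_diagonal, Matrix.trace_diagonal]
          exact Finset.sum_congr rfl fun i _ => (sq (d i)).symm
  have hfrobconj : ∑ i, ∑ j, ((Uᵀ * M * U) i j) ^ 2 = ∑ i, ∑ j, (M i j) ^ 2 := by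
    rw [frob_eq_trace, frob_eq_trace]
    have hT : (Uᵀ * M * U)ᵀ = Uᵀ * Mᵀ * U := by
      rw [Matrix.transpose_mul, Matrix.transpose_mul, transpose_transpose]
      simp only [Matrix.mul_assoc]
    rw [hT, ← conj_mul_split hU2, trace_conj hU2]
  calc ∑ i, ∑ j, (E i j) ^ 2 = ∑ i, d i ^ 2 := hEsum
    _ ≤ ∑ i, |(Uᵀ * M * U) i i| := Finset.sum_le_sum fun i _ => hsq i
    _ ≤ Real.sqrt n * Real.sqrt (∑ i, ((Uᵀ * M * U) i i) ^ 2) :=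
        sum_abs_le_sqrt _
    _ ≤ Real.sqrt n * Real.sqrt (∑ i, ∑ j, ((Uᵀ * M * U) i j) ^ 2) := by
        apply mul_le_mul_of_nonneg_left _ (Real.sqrt_nonneg _)
        apply Real.sqrt_le_sqrt
        apply Finset.sum_le_sum
        intro i _
        exact Finset.single_le_sum (f := fun j => ((Uᵀ * M * U) i j) ^ 2)
          (fun j _ => sq_nonneg _) (Finset.mem_univ i)
    _ = Real.sqrt n * frobNorm M := by rw [hfrobconj]; rfl


lemma psd_transpose_mul_self (M : Matrix (Fin n) (Fin n) ℝ) : (Mᵀ * M).PosSemidef := by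
  have := Matrix.posSemidef_conjTranspose_mul_self M
  rwa [star_eq_transpose] at this

lemma spec_eig_nonneg (M : Matrix (Fin n) (Fin n) ℝ) (i : Fin n) :
    0 ≤ (Matrix.isHermitian_transpose_mul_self M).eigenvalues i :=
  (psd_transpose_mul_self M).eigenvalues_nonneg i

lemma spec_le_frob (M : Matrix (Fin n) (Fin n) ℝ) : specNorm M ≤ frobNorm M := by
  unfold specNorm
  apply Real.iSup_le _ (frob_nonneg M)
  intro i
  have ht := spec_eig_nonneg M i
  have hsum : ∑ j, (Matrix.isHermitian_transpose_mul_self M).eigenvalues j =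
      ∑ a, ∑ b, (M a b) ^ 2 := by
    rw [← trace_eq_sum_eigen (Matrix.isHermitian_transpose_mul_self M), frob_eq_trace]
  have hle : (Matrix.isHermitian_transpose_mul_self M).eigenvalues i ≤
      ∑ a, ∑ b, (M a b) ^ 2 := by
    rw [← hsum]
    exact Finset.single_le_sum (fun j _ => spec_eig_nonneg M j) (Finset.mem_univ i)
  exact Real.sqrt_le_sqrt hle

lemma eig_bound {S X : Matrix (Fin n) (Fin n) ℝ} (hS : S.PosSemidef) (hX : X.PosSemidef)
    {c : ℝ} (hc0 : 0 < c) (hc : ∀ v, c * (v ⬝ᵥ v) ≤ v ⬝ᵥ S *ᵥ v)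
    {v : Fin n → ℝ} (hv : v ≠ 0) {μ : ℝ} (hEv : (S - X) *ᵥ v = μ • v) :
    |μ| * c ≤ frobNorm (S * S - X * X) := by
  set E := S - X with hEdef
  set M := S * S - X * X with hMdef
  have hET : Eᵀ = E := by rw [← star_eq_transpose]; exact (hS.1.sub hX.1).eq
  have h1 : v ⬝ᵥ M *ᵥ v = μ * (v ⬝ᵥ S *ᵥ v + v ⬝ᵥ X *ᵥ v) := by
    have hM' : M = E * S + X * E := by rw [hEdef, hMdef]; noncomm_ring
    rw [hM']
    rw [Matrix.add_mulVec, dotProduct_add]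
    have ha : v ⬝ᵥ (E * S) *ᵥ v = μ * (v ⬝ᵥ S *ᵥ v) := by
      rw [← Matrix.mulVec_mulVec, Matrix.dotProduct_mulVec v E (S *ᵥ v),
        ← Matrix.mulVec_transpose, hET, hEv]
      simp [smul_dotProduct]
    have hb : v ⬝ᵥ (X * E) *ᵥ v = μ * (v ⬝ᵥ X *ᵥ v) := by
      rw [← Matrix.mulVec_mulVec, hEv, Matrix.mulVec_smul]
      simp [dotProduct_smul]
    rw [ha, hb]
    ring
  have hXv : 0 ≤ v ⬝ᵥ X *ᵥ v := by simpa using hX.dotProduct_mulVec_nonneg v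
  have hSv : c * (v ⬝ᵥ v) ≤ v ⬝ᵥ S *ᵥ v := hc v
  have hvv : 0 < v ⬝ᵥ v := dot_self_pos hv
  have hsum_nonneg : 0 ≤ v ⬝ᵥ S *ᵥ v + v ⬝ᵥ X *ᵥ v := by nlinarith
  have h2 : |μ| * c * (v ⬝ᵥ v) ≤ |v ⬝ᵥ M *ᵥ v| := by
    rw [h1, abs_mul, abs_of_nonneg hsum_nonneg]
    have : c * (v ⬝ᵥ v) ≤ v ⬝ᵥ S *ᵥ v + v ⬝ᵥ X *ᵥ v := by linarith
    calc |μ| * c * (v ⬝ᵥ v) = |μ| * (c * (v ⬝ᵥ v)) := by ring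
      _ ≤ |μ| * (v ⬝ᵥ S *ᵥ v + v ⬝ᵥ X *ᵥ v) :=
          mul_le_mul_of_nonneg_left this (abs_nonneg _)
  have h3 : |v ⬝ᵥ M *ᵥ v| ≤ frobNorm M * (v ⬝ᵥ v) := dot_mulVec_abs_le M v
  have h4 : |μ| * c * (v ⬝ᵥ v) ≤ frobNorm M * (v ⬝ᵥ v) := le_trans h2 h3
  exact le_of_mul_le_mul_right h4 hvv

lemma spec_bound {S X : Matrix (Fin n) (Fin n) ℝ} (hS : S.PosSemidef) (hX : X.PosSemidef)
    {c : ℝ} (hc0 : 0 < c) (hc : ∀ v, c * (v ⬝ᵥ v) ≤ v ⬝ᵥ S *ᵥ v) :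
    specNorm (S - X) ≤ frobNorm (S * S - X * X) / c := by
  unfold specNorm
  apply Real.iSup_le _ (div_nonneg (frob_nonneg _) hc0.le)
  intro i
  set E := S - X with hEdef
  have hET : Eᵀ = E := by rw [← star_eq_transpose]; exact (hS.1.sub hX.1).eq
  set hH := Matrix.isHermitian_transpose_mul_self E with hHdef
  set t := hH.eigenvalues i with htdef
  have ht0 : 0 ≤ t := spec_eig_nonneg E i
  obtain ⟨w, hw0, hwt⟩ := exists_eigenvector hH i
  rw [← htdef] at hwt
  have hEEw : E *ᵥ (E *ᵥ w) = t • w := by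
    rw [Matrix.mulVec_mulVec]
    nth_rewrite 1 [← hET]
    exact hwt
  set s := Real.sqrt t with hsdef
  have hs0 : 0 ≤ s := Real.sqrt_nonneg _
  have hss : s * s = t := Real.mul_self_sqrt ht0
  have hbound : s * c ≤ frobNorm (S * S - X * X) := by
    by_cases hu : E *ᵥ w + s • w = 0
    · have hEw : E *ᵥ w = (-s) • w := by
        have := eq_neg_of_add_eq_zero_left hu
        rw [this, neg_smul]
      have := eig_bound hS hX hc0 hc hw0 hEw
      rwa [abs_neg, abs_of_nonneg hs0] at this
    · set u := E *ᵥ w + s • w with hudef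
      have hEu : E *ᵥ u = s • u := by
        rw [hudef, Matrix.mulVec_add, Matrix.mulVec_smul, hEEw, smul_add, smul_smul, hss]
        abel
      have := eig_bound hS hX hc0 hc hu hEu
      rwa [abs_of_nonneg hs0] at this
  rw [← hsdef.symm]
  calc s ≤ frobNorm (S * S - X * X) / c := (le_div_iff₀ hc0).mpr hbound

end Hlp

theorem inv_sqrt_update_error_bound {n k : ℕ} (α : ℝ) (hα : α = 1 ∨ α = -1)
    (A : Matrix (Fin n) (Fin n) ℝ) (Z : Matrix (Fin n) (Fin k) ℝ)
    (hA : A.PosDef) (hB : (A + α • (Z * Zᵀ)).PosDef)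
    (h : ((1 : Matrix (Fin k) (Fin k) ℝ) + α • (Zᵀ * A⁻¹ * Z)).PosDef)
    (Ct : Matrix (Fin n) (Fin n) ℝ) (hC : Ct.PosSemidef)
    (hpos : ((hA.posSemidef.sqrt)⁻¹ - α • Ct).PosDef) :
    frobNorm ((hB.posSemidef.sqrt)⁻¹ - ((hA.posSemidef.sqrt)⁻¹ - α • Ct)) ≤
      Real.sqrt (Real.sqrt n *
        frobNorm ((A⁻¹ * Z * (h.posSemidef.sqrt)⁻¹) * (A⁻¹ * Z * (h.posSemidef.sqrt)⁻¹)ᵀ -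
          (hA.posSemidef.sqrt)⁻¹ * Ct - Ct * (hA.posSemidef.sqrt)⁻¹ + α • Ct ^ 2)) ∧
    specNorm ((hB.posSemidef.sqrt)⁻¹ - ((hA.posSemidef.sqrt)⁻¹ - α • Ct)) ≤
      min (frobNorm ((A⁻¹ * Z * (h.posSemidef.sqrt)⁻¹) * (A⁻¹ * Z * (h.posSemidef.sqrt)⁻¹)ᵀ -
            (hA.posSemidef.sqrt)⁻¹ * Ct - Ct * (hA.posSemidef.sqrt)⁻¹ + α • Ct ^ 2) /
          Real.sqrt (lambdaMin hB.inv.1))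
        (Real.sqrt (Real.sqrt n *
          frobNorm ((A⁻¹ * Z * (h.posSemidef.sqrt)⁻¹) * (A⁻¹ * Z * (h.posSemidef.sqrt)⁻¹)ᵀ -
            (hA.posSemidef.sqrt)⁻¹ * Ct - Ct * (hA.posSemidef.sqrt)⁻¹ + α • Ct ^ 2))) := by
  have hα2 : α * α = 1 := by rcases hα with rfl | rfl <;> norm_num
  set Sa : Matrix (Fin n) (Fin n) ℝ := (hA.posSemidef.sqrt)⁻¹ with hSadef
  set Sb : Matrix (Fin n) (Fin n) ℝ := (hB.posSemidef.sqrt)⁻¹ with hSbdef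
  set Ws : Matrix (Fin k) (Fin k) ℝ := h.posSemidef.sqrt with hWsdef
  set V : Matrix (Fin n) (Fin k) ℝ := A⁻¹ * Z * Ws⁻¹ with hVdef
  set R : Matrix (Fin n) (Fin n) ℝ := V * Vᵀ - Sa * Ct - Ct * Sa + α • Ct ^ 2 with hRdef
  set X : Matrix (Fin n) (Fin n) ℝ := Sa - α • Ct with hXdef
  set W : Matrix (Fin k) (Fin k) ℝ := 1 + α • (Zᵀ * A⁻¹ * Z) with hWdef
  -- basic facts
  have hAu : IsUnit A.det := isUnit_iff_ne_zero.mpr hA.det_pos.ne'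
  have hWu : IsUnit W.det := isUnit_iff_ne_zero.mpr h.det_pos.ne'
  have hAinv : A * A⁻¹ = 1 := Matrix.mul_nonsing_inv A hAu
  have hWinv : W * W⁻¹ = 1 := Matrix.mul_nonsing_inv W hWu
  have hXpsd : X.PosSemidef := hpos.posSemidef
  have hSbPD : Sb.PosDef := (Hlp.sqrt_posDef hB).inv
  have hSbpsd : Sb.PosSemidef := hSbPD.posSemidef
  have hSb2 : Sb * Sb = (A + α • (Z * Zᵀ))⁻¹ := by
    rw [hSbdef, ← Matrix.mul_inv_rev, hB.posSemidef.sqrt_mul_self]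
  have hSa2 : Sa * Sa = A⁻¹ := by
    rw [hSadef, ← Matrix.mul_inv_rev, hA.posSemidef.sqrt_mul_self]
  have hAT : Aᵀ = A := by rw [← Hlp.star_eq_transpose]; exact hA.1.eq
  have hAinvT : (A⁻¹)ᵀ = A⁻¹ := by rw [Matrix.transpose_nonsing_inv, hAT]
  have hWsT : Wsᵀ = Ws := by
    rw [← Hlp.star_eq_transpose]; exact h.posSemidef.posSemidef_sqrt.1.eq
  have hWs2 : Ws * Ws = W := h.posSemidef.sqrt_mul_self
  have hVT : Vᵀ = Ws⁻¹ * (Zᵀ * A⁻¹) := by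
    rw [hVdef, Matrix.transpose_mul, Matrix.transpose_mul, Matrix.transpose_nonsing_inv,
      hWsT, hAinvT]
  have hVVT : V * Vᵀ = A⁻¹ * (Z * (W⁻¹ * (Zᵀ * A⁻¹))) := by
    rw [hVT, hVdef]
    calc A⁻¹ * Z * Ws⁻¹ * (Ws⁻¹ * (Zᵀ * A⁻¹))
        = A⁻¹ * (Z * ((Ws⁻¹ * Ws⁻¹) * (Zᵀ * A⁻¹))) := by simp only [Matrix.mul_assoc]
      _ = A⁻¹ * (Z * ((Ws * Ws)⁻¹ * (Zᵀ * A⁻¹))) := by rw [← Matrix.mul_inv_rev]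
      _ = A⁻¹ * (Z * (W⁻¹ * (Zᵀ * A⁻¹))) := by rw [hWs2]
  -- Woodbury
  have hWood : (A + α • (Z * Zᵀ))⁻¹ = A⁻¹ - α • (A⁻¹ * (Z * (W⁻¹ * (Zᵀ * A⁻¹)))) := by
    apply Matrix.inv_eq_right_inv
    have hAc : ∀ Y : Matrix (Fin n) (Fin n) ℝ, A * (A⁻¹ * Y) = Y := fun Y => by
      rw [← Matrix.mul_assoc, hAinv, Matrix.one_mul]
    have h1W : Z * (Zᵀ * A⁻¹) = Z * (W⁻¹ * (Zᵀ * A⁻¹)) +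
        α • (Z * ((Zᵀ * A⁻¹ * Z) * (W⁻¹ * (Zᵀ * A⁻¹)))) := by
      calc Z * (Zᵀ * A⁻¹) = Z * ((W * W⁻¹) * (Zᵀ * A⁻¹)) := by
            rw [hWinv, Matrix.one_mul]
        _ = _ := by
            rw [hWdef]
            simp only [Matrix.add_mul, Matrix.one_mul, Matrix.smul_mul, Matrix.mul_add,
              Matrix.mul_smul, Matrix.mul_assoc]
    rw [Matrix.add_mul, Matrix.mul_sub, Matrix.mul_sub, Matrix.smul_mul, Matrix.mul_smul,
      Matrix.mul_smul, hAinv, hAc]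
    rw [Matrix.smul_mul, smul_smul, hα2, one_smul]
    have hassoc1 : Z * Zᵀ * A⁻¹ = Z * (Zᵀ * A⁻¹) := by simp only [Matrix.mul_assoc]
    have hassoc2 : Z * Zᵀ * (A⁻¹ * (Z * (W⁻¹ * (Zᵀ * A⁻¹)))) =
        Z * (Zᵀ * A⁻¹ * Z * (W⁻¹ * (Zᵀ * A⁻¹))) := by simp only [Matrix.mul_assoc]
    rw [hassoc1, hassoc2, h1W, smul_add, smul_smul, hα2, one_smul]
    abel
  -- the key algebraic identity
  have hM : Sb * Sb - X * X = (-α) • R := by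
    have hXX : X * X = Sa * Sa - α • (Sa * Ct) - α • (Ct * Sa) + Ct * Ct := by
      rw [hXdef]
      simp only [Matrix.sub_mul, Matrix.mul_sub, Matrix.smul_mul, Matrix.mul_smul, smul_smul, smul_sub]
      rw [hα2, one_smul]
      abel
    rw [hSb2, hWood, ← hVVT, hXX, hSa2, hRdef, pow_two]
    match_scalars <;> first | ring1 | linear_combination hα2 | linear_combination -hα2
  -- Frobenius norms agree
  have hfrobR : frobNorm (Sb * Sb - X * X) = frobNorm R := by
    rw [hM]
    unfold frobNorm
    congr 1
    refine Finset.sum_congr rfl fun i _ => Finset.sum_congr rfl fun j _ => ?_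
    have : ((-α) • R) i j = -α * R i j := rfl
    rw [this]
    calc (-α * R i j) ^ 2 = (α * α) * R i j ^ 2 := by ring
      _ = R i j ^ 2 := by rw [hα2, one_mul]
  -- Frobenius bound
  have hPS := Hlp.powers_stormer hSbpsd hXpsd
  rw [hfrobR] at hPS
  have goal1 : frobNorm (Sb - X) ≤ Real.sqrt (Real.sqrt n * frobNorm R) := by
    have : frobNorm (Sb - X) = Real.sqrt (∑ i, ∑ j, ((Sb - X) i j) ^ 2) := rfl
    rw [this]
    exact Real.sqrt_le_sqrt hPS
  refine ⟨goal1, ?_⟩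
  -- spectral bound
  apply le_min
  · -- first arm
    rcases Nat.eq_zero_or_pos n with hn | hn
    · subst hn
      have hspec0 : specNorm (Sb - X) = 0 := by
        rw [specNorm]
        exact Real.iSup_of_isEmpty _
      rw [hspec0]
      exact div_nonneg (Hlp.frob_nonneg _) (Real.sqrt_nonneg _)
    · haveI : Nonempty (Fin n) := ⟨⟨0, hn⟩⟩
      set c : ℝ := Real.sqrt (lambdaMin hB.inv.1) with hcdef
      have hbddB : BddBelow (Set.range (hB.inv.1.eigenvalues)) :=
        Set.Finite.bddBelow (Set.finite_range _)
      have hlampos : 0 < lambdaMin hB.inv.1 := by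
        obtain ⟨j, hj⟩ := Finite.exists_min (hB.inv.1.eigenvalues)
        have : lambdaMin hB.inv.1 = hB.inv.1.eigenvalues j :=
          le_antisymm (ciInf_le hbddB j) (le_ciInf hj)
        rw [this]
        exact hB.inv.eigenvalues_pos j
      have hc0 : 0 < c := Real.sqrt_pos.mpr hlampos
      have hc : ∀ v : Fin n → ℝ, c * (v ⬝ᵥ v) ≤ v ⬝ᵥ Sb *ᵥ v := by
        obtain ⟨j, hj⟩ := Finite.exists_min (hSbPD.1.eigenvalues)
        have hfj : 0 < hSbPD.1.eigenvalues j := hSbPD.eigenvalues_pos j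
        obtain ⟨w, hw0, hww⟩ := Hlp.exists_eigenvector hSbPD.1 j
        have hBw : (A + α • (Z * Zᵀ))⁻¹ *ᵥ w =
            (hSbPD.1.eigenvalues j * hSbPD.1.eigenvalues j) • w := by
          rw [← hSb2, ← Matrix.mulVec_mulVec, hww, Matrix.mulVec_smul, hww, smul_smul]
        have hlamle : lambdaMin hB.inv.1 ≤ hSbPD.1.eigenvalues j * hSbPD.1.eigenvalues j :=
          Hlp.inf_eigen_le hB.inv.1 hw0 hBw
        have hcfj : c ≤ hSbPD.1.eigenvalues j := by
          rw [hcdef]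
          calc Real.sqrt (lambdaMin hB.inv.1) ≤
              Real.sqrt (hSbPD.1.eigenvalues j * hSbPD.1.eigenvalues j) :=
                Real.sqrt_le_sqrt hlamle
            _ = hSbPD.1.eigenvalues j := Real.sqrt_mul_self hfj.le
        intro v
        calc c * (v ⬝ᵥ v) ≤ hSbPD.1.eigenvalues j * (v ⬝ᵥ v) :=
              mul_le_mul_of_nonneg_right hcfj (Hlp.dot_self_nonneg v)
          _ ≤ v ⬝ᵥ Sb *ᵥ v := Hlp.rayleigh_lower hSbPD.1 _ hj v
      have := Hlp.spec_bound hSbpsd hXpsd hc0 hc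
      rwa [hfrobR] at this
  · -- second arm
    exact le_trans (Hlp.spec_le_frob (Sb - X)) goal1
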